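/- Under the hypotheses of the generalized lopsided Lovász local lemma (constant c ≥ 1, numbers x_i ∈ [0,1/c) satisfying P(A_i | ⋀_{j∈S} A_j^c) ≤ c·P(A_i) for all S ⊆ [n]\(Γ(i)∪{i}) and P(A_i) ≤ x_i ∏_{j∈Γ(i)}(1 − c x_j)), one has the key inductive estimate: for every index i and every S ⊆ [n] with i ∉ S, P(A_i | ⋀_{j∈S} A_j^c) ≤ c·x_i. -/

import Mathlib

open MeasureTheory

/-- The key inductive estimate in the generalized lopsided Lovász local lemma:
conditioned on any collection of complements not containing `A i`, the
conditional probability of `A i` is at most `c * x i`. -/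
theorem glll_inductive_estimate
    {Ω : Type*} [MeasurableSpace Ω] (μ : Measure Ω) [IsProbabilityMeasure μ]
    {n : ℕ} (A : Fin n → Set Ω) (hA : ∀ i, MeasurableSet (A i))
    (Γ : Fin n → Finset (Fin n)) (hΓ : ∀ i, i ∉ Γ i)
    (c : ℝ) (hc : 1 ≤ c) (x : Fin n → ℝ) (hx : ∀ i, x i ∈ Set.Ico (0 : ℝ) (1 / c))
    (hcond : ∀ i (S : Finset (Fin n)), i ∉ S → (∀ j ∈ S, j ∉ Γ i) →
      (μ (A i ∩ ⋂ j ∈ S, (A j)ᶜ)).toReal / (μ (⋂ j ∈ S, (A j)ᶜ)).toReal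
        ≤ c * (μ (A i)).toReal)
    (hbound : ∀ i, (μ (A i)).toReal ≤ x i * ∏ j ∈ Γ i, (1 - c * x j)) :
    ∀ i (S : Finset (Fin n)), i ∉ S →
      (μ (A i ∩ ⋂ j ∈ S, (A j)ᶜ)).toReal / (μ (⋂ j ∈ S, (A j)ᶜ)).toReal
        ≤ c * x i := by
  have hc0 : (0:ℝ) < c := lt_of_lt_of_le one_pos hc
  have hx0 : ∀ j, 0 ≤ x j := fun j => (hx j).1
  have hfac_pos : ∀ j, 0 < 1 - c * x j := by
    intro j
    have h1 : x j < 1 / c := (hx j).2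
    have h2 : c * x j < c * (1 / c) := mul_lt_mul_of_pos_left h1 hc0
    rw [mul_one_div, div_self (ne_of_gt hc0)] at h2
    linarith
  have hfac_le1 : ∀ j, 1 - c * x j ≤ 1 := by
    intro j
    nlinarith [hx0 j, hc0]
  -- abbreviations
  set P : Finset (Fin n) → ℝ := fun S => (μ (⋂ j ∈ S, (A j)ᶜ)).toReal with hP
  set f : Fin n → Finset (Fin n) → ℝ :=
    fun i S => (μ (A i ∩ ⋂ j ∈ S, (A j)ᶜ)).toReal with hf
  have hPnn : ∀ S, 0 ≤ P S := fun S => ENNReal.toReal_nonneg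
  have hfnn : ∀ i S, 0 ≤ f i S := fun i S => ENNReal.toReal_nonneg
  have hzero : ∀ i (S : Finset (Fin n)), P S = 0 → f i S = 0 := by
    intro i S h0
    have hne : μ (⋂ j ∈ S, (A j)ᶜ) ≠ ⊤ := measure_ne_top μ _
    have h0' : μ (⋂ j ∈ S, (A j)ᶜ) = 0 := by
      have := (ENNReal.toReal_eq_zero_iff _).1 h0
      tauto
    have hle : μ (A i ∩ ⋂ j ∈ S, (A j)ᶜ) ≤ μ (⋂ j ∈ S, (A j)ᶜ) :=
      measure_mono Set.inter_subset_right
    have : μ (A i ∩ ⋂ j ∈ S, (A j)ᶜ) = 0 := le_antisymm (h0' ▸ hle) zero_le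
    simp [hf, this]
  -- multiplicative version of hcond
  have hcond' : ∀ i (S : Finset (Fin n)), i ∉ S → (∀ j ∈ S, j ∉ Γ i) →
      f i S ≤ c * (μ (A i)).toReal * P S := by
    intro i S hiS hSΓ
    rcases eq_or_lt_of_le (hPnn S) with h0 | hpos
    · rw [hzero i S h0.symm, ← h0]
      ring_nf
      positivity
    · have := hcond i S hiS hSΓ
      have h := (div_le_iff₀ hpos).1 this
      linarith [h]
  -- the "no neighbors" bound
  have hfree : ∀ i (S : Finset (Fin n)), i ∉ S → (∀ j ∈ S, j ∉ Γ i) →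
      f i S ≤ c * x i * P S := by
    intro i S hiS hSΓ
    have h1 := hcond' i S hiS hSΓ
    have hprod1 : (∏ j ∈ Γ i, (1 - c * x j)) ≤ 1 :=
      Finset.prod_le_one (fun j _ => le_of_lt (hfac_pos j)) (fun j _ => hfac_le1 j)
    have h2 : (μ (A i)).toReal ≤ x i := by
      calc (μ (A i)).toReal ≤ x i * ∏ j ∈ Γ i, (1 - c * x j) := hbound i
        _ ≤ x i * 1 := by
            apply mul_le_mul_of_nonneg_left hprod1 (hx0 i)
        _ = x i := mul_one _
    calc f i S ≤ c * (μ (A i)).toReal * P S := h1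
      _ ≤ c * x i * P S := by
          apply mul_le_mul_of_nonneg_right _ (hPnn S)
          exact mul_le_mul_of_nonneg_left h2 (le_of_lt hc0)
  -- step identity
  have hstep : ∀ (j : Fin n) (T : Finset (Fin n)), j ∉ T →
      P (insert j T) = P T - f j T := by
    intro j T hjT
    have hmT : MeasurableSet (⋂ k ∈ T, (A k)ᶜ) :=
      MeasurableSet.biInter (Set.to_countable _) (fun k _ => (hA k).compl)
    have hsplit : μ (⋂ k ∈ T, (A k)ᶜ)
        = μ (A j ∩ ⋂ k ∈ T, (A k)ᶜ) + μ ((A j)ᶜ ∩ ⋂ k ∈ T, (A k)ᶜ) := by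
      rw [Set.inter_comm (A j), Set.inter_comm ((A j)ᶜ), ← Set.diff_eq]
      exact (measure_inter_add_diff _ (hA j)).symm
    have hins : (⋂ k ∈ insert j T, (A k)ᶜ) = (A j)ᶜ ∩ ⋂ k ∈ T, (A k)ᶜ := by
      simp [Set.biInter_insert]
    have := congrArg ENNReal.toReal hsplit
    rw [ENNReal.toReal_add (measure_ne_top μ _) (measure_ne_top μ _)] at this
    simp only [hP, hf, hins]
    linarith [this]
  -- the key inductive estimate, multiplicative form
  have key : ∀ N (S : Finset (Fin n)), S.card ≤ N → ∀ i, i ∉ S →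
      f i S ≤ c * x i * P S := by
    intro N
    induction N with
    | zero =>
        intro S hcard i hiS
        have : S = ∅ := Finset.card_eq_zero.1 (Nat.le_zero.1 hcard)
        subst this
        exact hfree i ∅ hiS (by simp)
    | succ N ih =>
        intro S hcard i hiS
        by_cases hS1 : S ∩ Γ i = ∅
        · refine hfree i S hiS ?_
          intro j hjS hjΓ
          exact (Finset.eq_empty_iff_forall_notMem.1 hS1 j) (Finset.mem_inter.2 ⟨hjS, hjΓ⟩)
        · set S₁ : Finset (Fin n) := S ∩ Γ i with hS₁def
          set S₂ : Finset (Fin n) := S \ Γ i with hS₂def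
          have hS₂sub : S₂ ⊆ S := Finset.sdiff_subset
          have hunion : S₂ ∪ S₁ = S := Finset.sdiff_union_inter S (Γ i)
          -- chain rule lower bound on P (S₂ ∪ T₁)
          have hchain : ∀ T₁ : Finset (Fin n), T₁ ⊆ S₁ →
              (∏ j ∈ T₁, (1 - c * x j)) * P S₂ ≤ P (S₂ ∪ T₁) := by
            intro T₁
            induction T₁ using Finset.induction_on with
            | empty => intro _; simp
            | @insert a T₁ haT₁ ihT =>
                intro hsub
                have haS₁ : a ∈ S₁ := hsub (Finset.mem_insert_self a T₁)
                have hTsub : T₁ ⊆ S₁ := fun b hb => hsub (Finset.mem_insert_of_mem hb)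
                have haS : a ∈ S := (Finset.mem_inter.1 haS₁).1
                have haΓ : a ∈ Γ i := (Finset.mem_inter.1 haS₁).2
                have haUnion : a ∉ S₂ ∪ T₁ := by
                  intro h
                  rcases Finset.mem_union.1 h with h | h
                  · exact (Finset.mem_sdiff.1 h).2 haΓ
                  · exact haT₁ h
                have hcardU : (S₂ ∪ T₁).card ≤ N := by
                  have hsub' : S₂ ∪ T₁ ⊆ S.erase a := by
                    intro b hb
                    refine Finset.mem_erase.2 ⟨?_, ?_⟩
                    · rintro rfl; exact haUnion hb
                    · rcases Finset.mem_union.1 hb with h | h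
                      · exact hS₂sub h
                      · exact (Finset.mem_inter.1 (hTsub h)).1
                  have := Finset.card_le_card hsub'
                  rw [Finset.card_erase_of_mem haS] at this
                  omega
                have hIH : f a (S₂ ∪ T₁) ≤ c * x a * P (S₂ ∪ T₁) :=
                  ih (S₂ ∪ T₁) hcardU a haUnion
                have hPU : (∏ j ∈ T₁, (1 - c * x j)) * P S₂ ≤ P (S₂ ∪ T₁) := ihT hTsub
                have hins : S₂ ∪ insert a T₁ = insert a (S₂ ∪ T₁) :=
                  Finset.union_insert a S₂ T₁
                rw [hins, hstep a (S₂ ∪ T₁) haUnion,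
                  Finset.prod_insert haT₁]
                have hfa := hfnn a (S₂ ∪ T₁)
                have h1 : (1 - c * x a) * P (S₂ ∪ T₁) ≤ P (S₂ ∪ T₁) - f a (S₂ ∪ T₁) := by
                  nlinarith
                calc ((1 - c * x a) * ∏ j ∈ T₁, (1 - c * x j)) * P S₂
                    = (1 - c * x a) * ((∏ j ∈ T₁, (1 - c * x j)) * P S₂) := by ring
                  _ ≤ (1 - c * x a) * P (S₂ ∪ T₁) :=
                      mul_le_mul_of_nonneg_left hPU (le_of_lt (hfac_pos a))
                  _ ≤ P (S₂ ∪ T₁) - f a (S₂ ∪ T₁) := h1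
          -- numerator bound
          have hmono : f i S ≤ f i S₂ := by
            apply ENNReal.toReal_mono (measure_ne_top μ _)
            apply measure_mono
            apply Set.inter_subset_inter_right
            intro y hy
            simp only [Set.mem_iInter] at hy ⊢
            exact fun j hj => hy j (hS₂sub hj)
          have hiS₂ : i ∉ S₂ := fun h => hiS (hS₂sub h)
          have hS₂Γ : ∀ j ∈ S₂, j ∉ Γ i := fun j hj => (Finset.mem_sdiff.1 hj).2
          have hnum : f i S₂ ≤ c * (μ (A i)).toReal * P S₂ := hcond' i S₂ hiS₂ hS₂Γ
          have hS₁Γ : S₁ ⊆ Γ i := Finset.inter_subset_right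
          have hprodΓ : (∏ j ∈ Γ i, (1 - c * x j)) ≤ ∏ j ∈ S₁, (1 - c * x j) := by
            rw [← Finset.prod_sdiff hS₁Γ]
            have h1 : (∏ j ∈ Γ i \ S₁, (1 - c * x j)) ≤ 1 :=
              Finset.prod_le_one (fun j _ => le_of_lt (hfac_pos j)) (fun j _ => hfac_le1 j)
            have h2 : 0 ≤ ∏ j ∈ S₁, (1 - c * x j) :=
              Finset.prod_nonneg (fun j _ => le_of_lt (hfac_pos j))
            nlinarith
          have hfin : (μ (A i)).toReal ≤ x i * ∏ j ∈ S₁, (1 - c * x j) := by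
            calc (μ (A i)).toReal ≤ x i * ∏ j ∈ Γ i, (1 - c * x j) := hbound i
              _ ≤ x i * ∏ j ∈ S₁, (1 - c * x j) :=
                  mul_le_mul_of_nonneg_left hprodΓ (hx0 i)
          calc f i S ≤ f i S₂ := hmono
            _ ≤ c * (μ (A i)).toReal * P S₂ := hnum
            _ ≤ c * (x i * ∏ j ∈ S₁, (1 - c * x j)) * P S₂ := by
                apply mul_le_mul_of_nonneg_right _ (hPnn S₂)
                exact mul_le_mul_of_nonneg_left hfin (le_of_lt hc0)
            _ = c * x i * ((∏ j ∈ S₁, (1 - c * x j)) * P S₂) := by ring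
            _ ≤ c * x i * P (S₂ ∪ S₁) := by
                apply mul_le_mul_of_nonneg_left (hchain S₁ (le_refl _))
                exact mul_nonneg hc0.le (hx0 i)
            _ = c * x i * P S := by rw [hunion]
  -- conclude
  intro i S hiS
  rcases eq_or_lt_of_le (hPnn S) with h0 | hpos
  · rw [show (μ (A i ∩ ⋂ j ∈ S, (A j)ᶜ)).toReal = f i S from rfl,
      show (μ (⋂ j ∈ S, (A j)ᶜ)).toReal = P S from rfl,
      hzero i S h0.symm, ← h0, div_zero]
    exact mul_nonneg hc0.le (hx0 i)
  · rw [div_le_iff₀ hpos]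
    have := key S.card S (le_refl _) i hiS
    linarith
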